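/- Let Φ ⊆ 𝒳 be nonempty and let ε > 0. If the obfuscation mechanism f satisfies ε-DP on Φ, then for every observed pseudo-location x' ∈ 𝒳, PivEr(Φ,x') ≥ e^{−ε} · E(Φ). -/
import Mathlib


open Finset

noncomputable section

/-- Points of the Euclidean plane. -/
abbrev Pt : Type := EuclideanSpace ℝ (Fin 2)

/-- if `f` satisfies `ε`-DP on a nonempty `Φ ⊆ X`, then for every observed `x'`,
`PivEr(Φ, x') ≥ e^{-ε} · E(Φ)` (both minima being taken over `Φ`). -/
theorem stmt3
    (X : Finset Pt) (hX : X.Nonempty)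
    (pr : Pt → ℝ) (hprpos : ∀ x ∈ X, 0 < pr x) (hprsum : ∑ x ∈ X, pr x = 1)
    (f : Pt → Pt → ℝ)  -- `f x' x` denotes f(x' | x)
    (hfpos : ∀ x ∈ X, ∀ x' ∈ X, 0 < f x' x)
    (hfsum : ∀ x ∈ X, ∑ x' ∈ X, f x' x = 1)
    (Φ : Finset Pt) (hΦ : Φ.Nonempty) (hΦX : Φ ⊆ X)
    (ε : ℝ) (hε : 0 < ε)
    (hDP : ∀ x ∈ Φ, ∀ y ∈ Φ, ∀ x' ∈ X, f x' x ≤ Real.exp ε * f x' y)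
    (x' : Pt) (hx' : x' ∈ X)
    (post : Pt → ℝ)  -- `post x` denotes the posterior Pr(x | x')
    (hpost : ∀ x, post x = pr x * f x' x / ∑ y ∈ X, pr y * f x' y)
    :
    Real.exp (-ε) * Φ.inf' hΦ (fun xh => ∑ x ∈ Φ, (pr x / ∑ y ∈ Φ, pr y) * dist xh x) ≤
      Φ.inf' hΦ (fun xh => ∑ x ∈ Φ, (post x / ∑ y ∈ Φ, post y) * dist xh x) := by
  set D := ∑ y ∈ X, pr y * f x' y with hD
  have hDpos : 0 < D :=
    Finset.sum_pos (fun y hy => mul_pos (hprpos y hy) (hfpos y hy x' hx')) hX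
  set S := ∑ y ∈ Φ, pr y * f x' y with hS
  have hSpos : 0 < S :=
    Finset.sum_pos (fun y hy => mul_pos (hprpos y (hΦX hy)) (hfpos y (hΦX hy) x' hx')) hΦ
  set P := ∑ y ∈ Φ, pr y with hP
  have hPpos : 0 < P := Finset.sum_pos (fun y hy => hprpos y (hΦX hy)) hΦ
  have hpostsum : ∑ y ∈ Φ, post y = S / D := by
    simp only [hpost]; rw [← Finset.sum_div]
  have hw : ∀ x ∈ Φ, post x / ∑ y ∈ Φ, post y = pr x * f x' x / S := by
    intro x hx
    rw [hpostsum, hpost]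
    field_simp
  have hkey : ∀ x ∈ Φ, Real.exp (-ε) * (pr x / P) ≤ pr x * f x' x / S := by
    intro x hx
    have hfx : 0 < f x' x := hfpos x (hΦX hx) x' hx'
    have hSle : S ≤ Real.exp ε * f x' x * P := by
      calc S = ∑ y ∈ Φ, pr y * f x' y := rfl
        _ ≤ ∑ y ∈ Φ, pr y * (Real.exp ε * f x' x) :=
          Finset.sum_le_sum fun y hy =>
            mul_le_mul_of_nonneg_left (hDP y hy x hx x' hx') (hprpos y (hΦX hy)).le
        _ = Real.exp ε * f x' x * P := by rw [hP, ← Finset.sum_mul]; ring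
    have h1 : Real.exp (-ε) * (pr x / P) = pr x / (Real.exp ε * P) := by
      rw [Real.exp_neg]; field_simp
    rw [h1, div_le_div_iff₀ (by positivity) hSpos]
    calc pr x * S ≤ pr x * (Real.exp ε * f x' x * P) :=
          mul_le_mul_of_nonneg_left hSle (hprpos x (hΦX hx)).le
      _ = pr x * f x' x * (Real.exp ε * P) := by ring
  obtain ⟨xh, hxh, hmin⟩ :=
    Φ.exists_mem_eq_inf' hΦ (fun xh => ∑ x ∈ Φ, (post x / ∑ y ∈ Φ, post y) * dist xh x)
  rw [hmin]
  calc Real.exp (-ε) * Φ.inf' hΦ (fun xh => ∑ x ∈ Φ, (pr x / P) * dist xh x)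
      ≤ Real.exp (-ε) * ∑ x ∈ Φ, (pr x / P) * dist xh x :=
        mul_le_mul_of_nonneg_left (Finset.inf'_le _ hxh) (Real.exp_pos _).le
    _ = ∑ x ∈ Φ, Real.exp (-ε) * (pr x / P) * dist xh x := by
        rw [Finset.mul_sum]; exact Finset.sum_congr rfl fun x _ => by ring
    _ ≤ ∑ x ∈ Φ, (post x / ∑ y ∈ Φ, post y) * dist xh x :=
        Finset.sum_le_sum fun x hx => by
          rw [hw x hx]
          exact mul_le_mul_of_nonneg_right (hkey x hx) dist_nonneg
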